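/- Let d ≥ 1, r ≥ 3 and e_1, …, e_r be integers with 2 ≤ e_i ≤ d for all i and 2d − 2 = Σ_{i=1}^r (e_i − 1). Then for every Hurwitz factorization (σ_1, …, σ_r) for (d, r, 0, (e_1, …, e_r)), the subgroup G of S_d generated by σ_1, …, σ_r acts primitively on {1, …, d}: the action is transitive and there is no partition of {1, …, d} into blocks permuted by G other than the partition into singletons and the partition with a single block. -/

import Mathlib

/-- A Hurwitz factorization for `(d, r, 0, (e 0, …, e (r-1)))`. -/
def HurwitzFactorization (d r : ℕ) (e : Fin r → ℕ)
    (σ : Fin r → Equiv.Perm (Fin d)) : Prop :=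
  (∀ i, (σ i).IsCycle ∧ (σ i).support.card = e i) ∧
  (List.ofFn σ).prod = 1 ∧
  ∀ x y : Fin d, ∃ g ∈ Subgroup.closure (Set.range σ), g x = y

section HurwitzAuxSection

open Equiv Equiv.Perm

set_option linter.unusedSectionVars false
set_option linter.unusedVariables false
set_option maxHeartbeats 1000000

namespace HurwitzAux

variable {α : Type*} [Fintype α] [DecidableEq α]



/-- `v f` = support size minus number of nontrivial cycles: the minimal number of
transpositions needed to write `f`. -/
def v (f : Perm α) : ℕ := f.support.card - f.cycleType.card

lemma card_cycleType_le (f : Perm α) : f.cycleType.card ≤ f.support.card := by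
  have h1 : f.cycleType.card • 1 ≤ f.cycleType.sum :=
    Multiset.card_nsmul_le_sum (fun x hx => by
      have := Equiv.Perm.two_le_of_mem_cycleType hx; omega)
  rw [Equiv.Perm.sum_cycleType, smul_eq_mul] at h1
  omega

lemma vchar (f : Perm α) : v f + f.cycleType.card = f.support.card :=
  Nat.sub_add_cancel (card_cycleType_le f)

@[simp] lemma v_one : v (1 : Perm α) = 0 := by simp [v]

lemma v_isCycle {f : Perm α} (hf : f.IsCycle) : v f + 1 = f.support.card := by
  have := vchar f
  rw [hf.cycleType] at this
  simpa using this

lemma v_swap {a b : α} (hab : a ≠ b) : v (swap a b) = 1 := by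
  have h := v_isCycle (isCycle_swap hab)
  rw [Equiv.Perm.support_swap hab] at h
  have : ({a, b} : Finset α).card = 2 := by
    rw [Finset.card_insert_of_notMem (by simpa using hab), Finset.card_singleton]
  omega

lemma v_mul_disjoint {f g : Perm α} (h : f.Disjoint g) : v (f * g) = v f + v g := by
  have h1 := h.card_support_mul
  have h2 : (f * g).cycleType.card = f.cycleType.card + g.cycleType.card := by
    rw [Equiv.Perm.Disjoint.cycleType_mul h, Multiset.card_add]
  have := vchar (f * g); have := vchar f; have := vchar g
  omega

lemma v_pos {f : Perm α} (hf : f ≠ 1) : 1 ≤ v f := by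
  have h1 : 1 ≤ f.cycleType.card := Equiv.Perm.card_cycleType_pos.2 hf
  have h2 : f.cycleType.card • 2 ≤ f.cycleType.sum :=
    Multiset.card_nsmul_le_sum (fun x hx => Equiv.Perm.two_le_of_mem_cycleType hx)
  rw [Equiv.Perm.sum_cycleType, smul_eq_mul] at h2
  have := vchar f
  omega

lemma v_formPerm {l : List α} (hnd : l.Nodup) (hl : 1 ≤ l.length) :
    v l.formPerm + 1 = l.length := by
  rcases Nat.lt_or_ge l.length 2 with h2 | h2
  · interval_cases h : l.length
    obtain ⟨x, rfl⟩ := List.length_eq_one_iff.1 h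
    simp [List.formPerm_singleton]
  · have hc := List.isCycle_formPerm hnd h2
    have hs := List.support_formPerm_of_nodup l hnd (by
      intro x hx; rw [hx] at h2; simp at h2)
    have := v_isCycle hc
    rw [hs, List.toFinset_card_of_nodup hnd] at this
    exact this

lemma swap_swap_eq {a b c : α} (hab : a ≠ b) (hcb : c ≠ b) (hac : a ≠ c) :
    swap a c * swap c b = swap a b * swap a c := by
  have := Equiv.mul_swap_eq_swap_mul (swap a c) c b
  rw [Equiv.swap_apply_of_ne_of_ne hab.symm hcb.symm, Equiv.swap_apply_right] at this
  -- this : swap a c * swap c b = swap a b * swap a c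
  exact this

/-- The key formPerm splitting identity. -/
lemma formPerm_split (a b : α) (t1 t2 : List α) (h : (a :: (t1 ++ b :: t2)).Nodup) :
    (a :: (t1 ++ b :: t2)).formPerm = swap a b * (a :: t1).formPerm * (b :: t2).formPerm := by
  induction t1 generalizing a with
  | nil =>
    simp only [List.nil_append, List.formPerm_cons_cons, List.formPerm_singleton, mul_one]
  | cons c t1' ih =>
    have hnd' : (c :: (t1' ++ b :: t2)).Nodup := h.of_cons
    have hab : a ≠ b := by
      have := List.Nodup.notMem h  -- a ∉ t1 ++ b :: t2 ?
      simp only [List.nodup_cons] at h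
      intro hh; exact h.1 (by simp [hh])
    have hac : a ≠ c := by
      simp only [List.nodup_cons] at h
      intro hh; exact h.1 (by simp [hh])
    have hcb : c ≠ b := by
      simp only [List.nodup_cons] at hnd'
      intro hh; exact hnd'.1 (by simp [hh])
    calc (a :: (c :: t1' ++ b :: t2)).formPerm
        = swap a c * (c :: (t1' ++ b :: t2)).formPerm := by
          rw [← List.formPerm_cons_cons]; rfl
      _ = swap a c * (swap c b * (c :: t1').formPerm * (b :: t2).formPerm) := by
          rw [ih c hnd']
      _ = (swap a c * swap c b) * (c :: t1').formPerm * (b :: t2).formPerm := by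
          group
      _ = (swap a b * swap a c) * (c :: t1').formPerm * (b :: t2).formPerm := by
          rw [swap_swap_eq hab hcb hac]
      _ = swap a b * (a :: c :: t1').formPerm * (b :: t2).formPerm := by
          rw [List.formPerm_cons_cons]; group





lemma sc_mem_support {g : Perm α} {a b : α} (hab : a ≠ b) (hsc : g.SameCycle a b) :
    a ∈ g.support := by
  by_contra h
  rw [mem_support, not_not] at h
  obtain ⟨n, hn⟩ := hsc
  rw [zpow_apply_eq_self_of_apply_eq_self h] at hn
  exact hab hn

lemma toList_eq_cons {g : Perm α} {a : α} (ha : a ∈ g.support) :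
    ∃ t, g.toList a = a :: t := by
  have h2 : 2 ≤ (g.toList a).length := two_le_length_toList_iff_mem_support.2 ha
  obtain ⟨x, t, hxt⟩ : ∃ x t, g.toList a = x :: t := by
    cases h : g.toList a with
    | nil => rw [h] at h2; simp at h2
    | cons x t => exact ⟨x, t, rfl⟩
  have hz := toList_getElem_zero g a ha
  simp only [hxt, List.getElem_cons_zero] at hz
  exact ⟨t, by rw [hxt, hz]⟩

lemma rest_fix {g : Perm α} {a : α} (x : α) (hx : g.SameCycle a x) :
    ((g.cycleOf a)⁻¹ * g) x = x := by
  have h1 : (g.cycleOf a) x = g x := by rw [cycleOf_apply]; simp [hx]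
  have : ((g.cycleOf a)⁻¹ * g) x = (g.cycleOf a)⁻¹ (g x) := rfl
  rw [this, ← h1]
  simp

lemma disjoint_cycleOf_rest (g : Perm α) (a : α) :
    (g.cycleOf a).Disjoint ((g.cycleOf a)⁻¹ * g) := by
  intro x
  by_cases h : g.SameCycle a x
  · right; exact rest_fix x h
  · left; exact cycleOf_apply_of_not_sameCycle h

theorem split_lemma {g : Perm α} {a b : α} (hab : a ≠ b) (hsc : g.SameCycle a b) :
    v (swap a b * g) + 1 = v g ∧ ¬ (swap a b * g).SameCycle a b := by
  classical
  have ha : a ∈ g.support := sc_mem_support hab hsc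
  obtain ⟨t, hL⟩ := toList_eq_cons ha
  have hnd : (g.toList a).Nodup := nodup_toList g a
  have hbL : b ∈ g.toList a := mem_toList_iff.2 ⟨hsc, ha⟩
  have hbt : b ∈ t := by
    rw [hL] at hbL
    rcases List.mem_cons.1 hbL with h | h
    · exact (hab h.symm).elim
    · exact h
  obtain ⟨t1, t2, ht⟩ := List.append_of_mem hbt
  have hL2 : g.toList a = a :: (t1 ++ b :: t2) := by rw [hL, ht]
  have hnd2 : (a :: (t1 ++ b :: t2)).Nodup := hL2 ▸ hnd
  have hnd2' : ((a :: t1) ++ (b :: t2)).Nodup := by rw [List.cons_append]; exact hnd2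
  set P1 := (a :: t1).formPerm with hP1
  set P2 := (b :: t2).formPerm with hP2
  set rest := (g.cycleOf a)⁻¹ * g with hrestdef
  have hcyc : g.cycleOf a = swap a b * P1 * P2 := by
    rw [← formPerm_toList g a, hL2]; exact formPerm_split a b t1 t2 hnd2
  have hg : g = g.cycleOf a * rest := by rw [hrestdef]; group
  have key : swap a b * g = P1 * (P2 * rest) := by
    conv_lhs => rw [hg, hcyc]
    have : swap a b * (swap a b * P1 * P2 * rest)
        = (swap a b * swap a b) * (P1 * (P2 * rest)) := by group
    rw [this, Equiv.swap_mul_self, one_mul]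
  have hsub1 : ∀ x ∈ (a :: t1), x ∈ g.toList a := by
    intro x hx; rw [hL2]
    rcases List.mem_cons.1 hx with h | h
    · exact List.mem_cons.2 (Or.inl h)
    · exact List.mem_cons.2 (Or.inr (List.mem_append.2 (Or.inl h)))
  have hsub2 : ∀ x ∈ (b :: t2), x ∈ g.toList a := by
    intro x hx; rw [hL2]
    exact List.mem_cons.2 (Or.inr (List.mem_append.2 (Or.inr hx)))
  have hfix : ∀ x ∈ g.toList a, rest x = x := fun x hx =>
    rest_fix x (mem_toList_iff.1 hx).1
  have hd12 : P1.Disjoint P2 := by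
    intro x
    by_cases hx : P1 x = x
    · left; exact hx
    · right
      have hx1 : x ∈ (a :: t1) := List.mem_of_formPerm_apply_ne hx
      by_contra hx2
      have hx2' : x ∈ (b :: t2) := List.mem_of_formPerm_apply_ne hx2
      exact (List.disjoint_of_nodup_append hnd2') hx1 hx2'
  have hd1r : P1.Disjoint rest := by
    intro x
    by_cases hx : P1 x = x
    · left; exact hx
    · right; exact hfix x (hsub1 x (List.mem_of_formPerm_apply_ne hx))
  have hd2r : P2.Disjoint rest := by
    intro x
    by_cases hx : P2 x = x
    · left; exact hx
    · right; exact hfix x (hsub2 x (List.mem_of_formPerm_apply_ne hx))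
  have hd1_2r : P1.Disjoint (P2 * rest) := hd12.mul_right hd1r
  have hv : v (swap a b * g) = v P1 + (v P2 + v rest) := by
    rw [key, v_mul_disjoint hd1_2r, v_mul_disjoint hd2r]
  have hvg : v g = v (g.cycleOf a) + v rest := by
    conv_lhs => rw [hg]
    exact v_mul_disjoint (disjoint_cycleOf_rest g a)
  have hlen : (g.toList a).length = t1.length + t2.length + 2 := by
    rw [hL2]; simp [List.length_append]; omega
  have hvc : v (g.cycleOf a) + 1 = (g.toList a).length := by
    rw [length_toList]
    exact v_isCycle (isCycle_cycleOf g (mem_support.1 ha))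
  have hv1 : v P1 + 1 = t1.length + 1 := by
    have := v_formPerm (hnd2'.of_append_left) (by simp)
    simpa using this
  have hv2 : v P2 + 1 = t2.length + 1 := by
    have := v_formPerm (hnd2'.of_append_right) (by simp)
    simpa using this
  constructor
  · omega
  · rintro ⟨n, hn⟩
    have hanb : a ∉ (b :: t2) := by
      have := (List.disjoint_of_nodup_append hnd2')
      intro hmem
      exact this (List.mem_cons_self) hmem
    have hP2a : P2 a = a := List.formPerm_apply_of_notMem hanb
    have hra : rest a = a := hfix a (by rw [hL2]; exact List.mem_cons_self)
    have hcomm : Commute P1 (P2 * rest) := (hd1_2r).commute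
    have hXa : (P2 * rest) a = a := by
      have : (P2 * rest) a = P2 (rest a) := rfl
      rw [this, hra, hP2a]
    have hpow : (swap a b * g) ^ n = P1 ^ n * (P2 * rest) ^ n := by
      rw [key, hcomm.mul_zpow]
    have hfix2 : ((P2 * rest) ^ n) a = a := zpow_apply_eq_self_of_apply_eq_self hXa n
    have hb : b = (P1 ^ n) a := by
      rw [← hn, hpow]
      have : (P1 ^ n * (P2 * rest) ^ n) a = (P1 ^ n) (((P2 * rest) ^ n) a) := rfl
      rw [this, hfix2]
    have hmem : (P1 ^ n) a ∈ (a :: t1) :=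
      List.form_perm_zpow_apply_mem_imp_mem _ a (List.mem_cons_self) n
    rw [← hb] at hmem
    rcases List.mem_cons.1 hmem with h | h
    · exact hab h.symm
    · exact (List.disjoint_of_nodup_append hnd2') hmem (List.mem_cons_self)





theorem merge_half {g : Perm α} {a b : α} (hab : a ≠ b) (hsc : ¬ g.SameCycle a b)
    (ha : a ∈ g.support) (hb : b ∉ g.support) : v (swap a b * g) = v g + 1 := by
  classical
  obtain ⟨t, hL⟩ := toList_eq_cons ha
  set rest := (g.cycleOf a)⁻¹ * g with hrestdef
  have hnd : (g.toList a).Nodup := nodup_toList g a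
  have hbnL : b ∉ g.toList a := by
    intro hmem
    exact hsc (mem_toList_iff.1 hmem).1
  have hnd2 : (a :: (t ++ b :: [])).Nodup := by
    have : (g.toList a ++ [b]).Nodup := by
      rw [List.nodup_append]
      refine ⟨hnd, List.nodup_singleton b, ?_⟩
      intro x hx y hy hxy
      simp at hy
      subst hy
      subst hxy
      exact hbnL hx
    rw [hL] at this
    simpa using this
  have hfp : (a :: (t ++ b :: [])).formPerm = swap a b * g.cycleOf a := by
    rw [formPerm_split a b t [] hnd2, List.formPerm_singleton, mul_one,
      ← formPerm_toList g a, hL]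
  have hg : g = g.cycleOf a * rest := by rw [hrestdef]; group
  have key : swap a b * g = (a :: (t ++ b :: [])).formPerm * rest := by
    conv_lhs => rw [hg]
    rw [hfp]; group
  have hfixb : rest b = b := by
    have hgb : g b = b := by rwa [mem_support, not_not] at hb
    have hcb : (g.cycleOf a) b = b := cycleOf_apply_of_not_sameCycle hsc
    have hcbinv : (g.cycleOf a)⁻¹ b = b := by
      conv_lhs => rw [← hcb]
      simp
    have : rest b = (g.cycleOf a)⁻¹ (g b) := rfl
    rw [this, hgb, hcbinv]
  have hdisj : (a :: (t ++ b :: [])).formPerm.Disjoint rest := by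
    intro x
    by_cases hx : (a :: (t ++ b :: [])).formPerm x = x
    · left; exact hx
    · right
      have hx1 : x ∈ (a :: (t ++ b :: [])) := List.mem_of_formPerm_apply_ne hx
      have hx2 : x ∈ g.toList a ∨ x = b := by
        rw [hL]
        rcases List.mem_cons.1 hx1 with h | h
        · left; exact List.mem_cons.2 (Or.inl h)
        · rcases List.mem_append.1 h with h' | h'
          · left; exact List.mem_cons.2 (Or.inr h')
          · right; simpa using h'
      rcases hx2 with h | h
      · exact rest_fix x (mem_toList_iff.1 h).1
      · rw [h]; exact hfixb
  have hv : v (swap a b * g) = v (a :: (t ++ b :: [])).formPerm + v rest := by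
    rw [key, v_mul_disjoint hdisj]
  have hvg : v g = v (g.cycleOf a) + v rest := by
    conv_lhs => rw [hg]
    exact v_mul_disjoint (disjoint_cycleOf_rest g a)
  have hlenL : (g.toList a).length = t.length + 1 := by rw [hL]; simp
  have hvc : v (g.cycleOf a) + 1 = t.length + 1 := by
    rw [← hlenL, length_toList]
    exact v_isCycle (isCycle_cycleOf g (mem_support.1 ha))
  have hvf : v (a :: (t ++ b :: [])).formPerm + 1 = t.length + 2 := by
    have := v_formPerm hnd2 (by simp)
    simp at this
    omega
  omega

theorem merge_lemma {g : Perm α} {a b : α} (hab : a ≠ b) (hsc : ¬ g.SameCycle a b) :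
    v (swap a b * g) = v g + 1 := by
  classical
  by_cases ha : a ∈ g.support
  · by_cases hb : b ∈ g.support
    · -- both moved, different cycles
      obtain ⟨ta, hLa⟩ := toList_eq_cons ha
      obtain ⟨tb, hLb⟩ := toList_eq_cons hb
      set ca := g.cycleOf a with hca
      set cb := g.cycleOf b with hcb
      set rest := (ca * cb)⁻¹ * g with hrestdef
      have hscb : ∀ x, g.SameCycle a x → ¬ g.SameCycle b x := fun x h1 h2 =>
        hsc (h1.trans h2.symm)
      have hdab : ca.Disjoint cb := by
        intro x
        by_cases h : g.SameCycle a x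
        · right; exact cycleOf_apply_of_not_sameCycle (hscb x h)
        · left; exact cycleOf_apply_of_not_sameCycle h
      have hrest_a : ∀ x, g.SameCycle a x → rest x = x := by
        intro x hx
        have h1 : ca x = g x := by rw [hca, cycleOf_apply]; simp [hx]
        have h2 : ca⁻¹ (g x) = x := by rw [← h1]; simp
        have h3 : cb⁻¹ x = x := by
          have := cycleOf_apply_of_not_sameCycle (hscb x hx)
          rw [← hcb] at this
          conv_lhs => rw [← this]
          simp
        have : rest x = cb⁻¹ (ca⁻¹ (g x)) := by rw [hrestdef]; simp [mul_apply]
        rw [this, h2, h3]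
      have hrest_b : ∀ x, g.SameCycle b x → rest x = x := by
        intro x hx
        have h1 : cb x = g x := by rw [hcb, cycleOf_apply]; simp [hx]
        have hnax : ¬ g.SameCycle a x := fun h => hscb x h hx
        have h2 : ca⁻¹ (g x) = g x := by
          have hnagx : ¬ g.SameCycle a (g x) := by
            rwa [sameCycle_apply_right]
          have := cycleOf_apply_of_not_sameCycle hnagx
          rw [← hca] at this
          conv_lhs => rw [← this]
          simp
        have h3 : cb⁻¹ (g x) = x := by rw [← h1]; simp
        have : rest x = cb⁻¹ (ca⁻¹ (g x)) := by rw [hrestdef]; simp [mul_apply]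
        rw [this, h2, h3]
      have hCrest : (ca * cb).Disjoint rest := by
        intro x
        by_cases h1 : g.SameCycle a x
        · right; exact hrest_a x h1
        · by_cases h2 : g.SameCycle b x
          · right; exact hrest_b x h2
          · left
            have e1 : cb x = x := cycleOf_apply_of_not_sameCycle h2
            have e2 : ca x = x := cycleOf_apply_of_not_sameCycle h1
            have : (ca * cb) x = ca (cb x) := rfl
            rw [this, e1, e2]
      have hnd2 : (a :: (ta ++ b :: tb)).Nodup := by
        have hdisjL : (g.toList a).Disjoint (g.toList b) := by
          intro x hxa hxb
          exact hscb x (mem_toList_iff.1 hxa).1 (mem_toList_iff.1 hxb).1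
        have : (g.toList a ++ g.toList b).Nodup :=
          (nodup_toList g a).append (nodup_toList g b) hdisjL
        rw [hLa, hLb] at this
        simpa using this
      have hfp : (a :: (ta ++ b :: tb)).formPerm = swap a b * (ca * cb) := by
        rw [formPerm_split a b ta tb hnd2, hca, hcb, ← formPerm_toList g a,
          ← formPerm_toList g b, hLa, hLb]
        group
      have hg : g = (ca * cb) * rest := by rw [hrestdef]; group
      have key : swap a b * g = (a :: (ta ++ b :: tb)).formPerm * rest := by
        conv_lhs => rw [hg]
        rw [hfp]; group
      have hdisj : (a :: (ta ++ b :: tb)).formPerm.Disjoint rest := by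
        intro x
        by_cases hx : (a :: (ta ++ b :: tb)).formPerm x = x
        · left; exact hx
        · right
          have hx1 : x ∈ (a :: (ta ++ b :: tb)) := List.mem_of_formPerm_apply_ne hx
          have hx2 : x ∈ g.toList a ∨ x ∈ g.toList b := by
            rw [hLa, hLb]
            rcases List.mem_cons.1 hx1 with h | h
            · left; exact List.mem_cons.2 (Or.inl h)
            · rcases List.mem_append.1 h with h' | h'
              · left; exact List.mem_cons.2 (Or.inr h')
              · right; exact h'
          rcases hx2 with h | h
          · exact hrest_a x (mem_toList_iff.1 h).1
          · exact hrest_b x (mem_toList_iff.1 h).1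
      have hv : v (swap a b * g) = v (a :: (ta ++ b :: tb)).formPerm + v rest := by
        rw [key, v_mul_disjoint hdisj]
      have hvg : v g = v ca + v cb + v rest := by
        conv_lhs => rw [hg]
        rw [v_mul_disjoint hCrest, v_mul_disjoint hdab]
      have hla : (g.toList a).length = ta.length + 1 := by rw [hLa]; simp
      have hlb : (g.toList b).length = tb.length + 1 := by rw [hLb]; simp
      have hvca : v ca + 1 = ta.length + 1 := by
        rw [← hla, hca, length_toList]
        exact v_isCycle (isCycle_cycleOf g (mem_support.1 ha))
      have hvcb : v cb + 1 = tb.length + 1 := by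
        rw [← hlb, hcb, length_toList]
        exact v_isCycle (isCycle_cycleOf g (mem_support.1 hb))
      have hvf : v (a :: (ta ++ b :: tb)).formPerm + 1 = ta.length + tb.length + 2 := by
        have := v_formPerm hnd2 (by simp)
        simp at this
        omega
      omega
    · exact merge_half hab hsc ha hb
  · by_cases hb : b ∈ g.support
    · rw [Equiv.swap_comm]
      exact merge_half hab.symm (fun h => hsc h.symm) hb ha
    · have hd : (swap a b).Disjoint g := by
        intro x
        by_cases hx : x = a ∨ x = b
        · right
          rcases hx with h | h <;> subst h
          · rwa [mem_support, not_not] at ha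
          · rwa [mem_support, not_not] at hb
        · left
          push_neg at hx
          exact Equiv.swap_apply_of_ne_of_ne hx.1 hx.2
      rw [v_mul_disjoint hd, v_swap hab]
      omega





lemma v_le_swap_mul {g : Perm α} {a b : α} (hab : a ≠ b) :
    v g ≤ v (swap a b * g) + 1 := by
  by_cases h : g.SameCycle a b
  · exact le_of_eq (split_lemma hab h).1.symm
  · rw [merge_lemma hab h]; omega

lemma exists_swap_factorization (g : Perm α) : ∃ w : List (Perm α),
    (∀ τ ∈ w, ∃ a b : α, a ≠ b ∧ τ = swap a b) ∧ w.prod = g ∧ w.length ≤ v g := by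
  suffices H : ∀ n (g : Perm α), v g ≤ n → ∃ w : List (Perm α),
      (∀ τ ∈ w, ∃ a b : α, a ≠ b ∧ τ = swap a b) ∧ w.prod = g ∧ w.length ≤ v g from
    H (v g) g le_rfl
  intro n
  induction n with
  | zero =>
    intro g hg
    have hg1 : g = 1 := by
      by_contra h
      have := v_pos h
      omega
    subst hg1
    exact ⟨[], by simp, by simp, by simp⟩
  | succ n ih =>
    intro g hg
    by_cases hg1 : g = 1
    · subst hg1; exact ⟨[], by simp, by simp, by simp⟩
    · have hsupp : g.support.Nonempty := by
        rw [← Finset.card_pos]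
        by_contra h
        push_neg at h
        interval_cases hc : g.support.card
        · exact hg1 (card_support_eq_zero.1 hc)
      obtain ⟨a, ha⟩ := hsupp
      have hga : g a ≠ a := mem_support.1 ha
      have hne : a ≠ g a := Ne.symm hga
      have hsc : g.SameCycle a (g a) := ⟨1, by simp⟩
      have hsplit := (split_lemma hne hsc).1
      obtain ⟨w, hw1, hw2, hw3⟩ := ih (swap a (g a) * g) (by omega)
      refine ⟨swap a (g a) :: w, ?_, ?_, ?_⟩
      · intro τ hτ
        rcases List.mem_cons.1 hτ with h | h
        · exact ⟨a, g a, hne, h⟩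
        · exact hw1 τ h
      · rw [List.prod_cons, hw2, ← mul_assoc, Equiv.swap_mul_self, one_mul]
      · simp only [List.length_cons]
        omega

/-- splitting a product of pairwise-commuting-across-filter elements -/
lemma prod_filter_commute {G : Type*} [Monoid G] (l : List G) (p : G → Prop)
    [DecidablePred p] (h : ∀ x ∈ l, ∀ y ∈ l, p x → ¬ p y → Commute x y) :
    l.prod = (l.filter p).prod * (l.filter fun x => ¬ p x).prod := by
  classical
  induction l with
  | nil => simp
  | cons x t ih =>
    have h' : ∀ a ∈ t, ∀ b ∈ t, p a → ¬ p b → Commute a b := fun a ha b hb =>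
      h a (List.mem_cons_of_mem _ ha) b (List.mem_cons_of_mem _ hb)
    by_cases hx : p x
    · rw [List.prod_cons, ih h', List.filter_cons_of_pos (by simpa using hx),
        List.filter_cons_of_neg (by simpa using hx), List.prod_cons, mul_assoc]
    · rw [List.prod_cons, ih h', List.filter_cons_of_neg (by simpa using hx),
        List.filter_cons_of_pos (by simpa using hx), List.prod_cons]
      have hc : Commute x (t.filter p).prod := by
        apply Commute.list_prod_right
        intro z hz
        have hz' := List.of_mem_filter hz
        simp only [decide_eq_true_eq] at hz'
        exact (h z (List.mem_cons_of_mem _ (List.mem_of_mem_filter hz)) x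
          (List.mem_cons_self) hz' hx).symm
      rw [← mul_assoc, hc.eq, mul_assoc]

lemma support_prod_sub (l : List (Perm α)) (t : Finset α)
    (h : ∀ g ∈ l, g.support ⊆ t) : l.prod.support ⊆ t := by
  induction l with
  | nil => simp
  | cons x xs ih =>
    rw [List.prod_cons]
    refine (Equiv.Perm.support_mul_le x xs.prod).trans ?_
    apply sup_le
    · exact h x (List.mem_cons_self)
    · exact ih (fun g hg => h g (List.mem_cons_of_mem _ hg))

lemma closure_preserves (S : Set (Perm α)) (t : Finset α)
    (h : ∀ g ∈ S, ∀ x ∈ t, g x ∈ t) :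
    ∀ g ∈ Subgroup.closure S, ∀ x ∈ t, g x ∈ t := by
  intro g hg
  induction hg using Subgroup.closure_induction with
  | mem g hgS => exact h g hgS
  | one => intro x hx; simpa using hx
  | mul g k hgc hkc ihg ihk => intro x hx; exact ihg _ (ihk x hx)
  | inv g hgc ihg =>
    intro x hx
    have himg : t.image g = t := by
      apply Finset.eq_of_subset_of_card_le
      · intro y hy
        obtain ⟨z, hz, rfl⟩ := Finset.mem_image.1 hy
        exact ihg z hz
      · rw [Finset.card_image_of_injective _ g.injective]
    rw [← himg] at hx
    obtain ⟨y, hy, hyx⟩ := Finset.mem_image.1 hx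
    have : g⁻¹ (g y) = y := by simp
    rw [← hyx, this]
    exact hy

/-- transfer transitivity to an invariant subset generated by the sub-list acting there -/
lemma transfer_trans (M Msub : List (Perm α)) (t : Finset α)
    (hsub : ∀ g ∈ Msub, g ∈ M)
    (hfix : ∀ g ∈ M, g ∉ Msub → ∀ x ∈ t, g x = x)
    (hpres : ∀ g ∈ Subgroup.closure {h : Perm α | h ∈ M}, ∀ x ∈ t, g x ∈ t) :
    ∀ g ∈ Subgroup.closure {h : Perm α | h ∈ M}, ∀ x ∈ t,
      ∃ k ∈ Subgroup.closure {h : Perm α | h ∈ Msub}, k x = g x := by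
  classical
  intro g hg
  induction hg using Subgroup.closure_induction with
  | mem g hgS =>
    intro x hx
    by_cases hgsub : g ∈ Msub
    · exact ⟨g, Subgroup.subset_closure hgsub, rfl⟩
    · exact ⟨1, one_mem _, by simp [hfix g hgS hgsub x hx]⟩
  | one => intro x hx; exact ⟨1, one_mem _, rfl⟩
  | mul g k hgc hkc ihg ihk =>
    intro x hx
    obtain ⟨k2, hk2, e2⟩ := ihk x hx
    obtain ⟨k1, hk1, e1⟩ := ihg (k x) (hpres k hkc x hx)
    refine ⟨k1 * k2, mul_mem hk1 hk2, ?_⟩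
    have : (k1 * k2) x = k1 (k2 x) := rfl
    rw [this, e2, e1]
    rfl
  | inv g hgc ihg =>
    intro x hx
    have hy : g⁻¹ x ∈ t := hpres g⁻¹ (inv_mem hgc) x hx
    obtain ⟨k1, hk1, e1⟩ := ihg (g⁻¹ x) hy
    refine ⟨k1⁻¹, inv_mem hk1, ?_⟩
    have : g (g⁻¹ x) = x := by simp
    rw [this] at e1
    have := congrArg (k1⁻¹ : Perm α) e1
    simpa using this.symm

theorem partA (n : ℕ) : ∀ (L : List (Perm α)) (s : Finset α), L.length ≤ n →
    (∀ g ∈ L, ∃ a b : α, a ≠ b ∧ g = swap a b ∧ a ∈ s ∧ b ∈ s) →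
    s.Nonempty →
    (∀ x ∈ s, ∀ y ∈ s, ∃ g ∈ Subgroup.closure {h : Perm α | h ∈ L}, g x = y) →
    2 * s.card ≤ L.length + v L.prod + 2 := by
  classical
  induction n with
  | zero =>
    intro L s hlen hmem hne htrans
    have hL : L = [] := List.length_eq_zero_iff.1 (Nat.le_zero.1 hlen)
    subst hL
    have hcard : s.card ≤ 1 := by
      apply Finset.card_le_one.2
      intro x hx y hy
      obtain ⟨g, hg, hgxy⟩ := htrans x hx y hy
      have : g = 1 := by
        have h0 : Subgroup.closure {h : Perm α | h ∈ ([] : List (Perm α))} = ⊥ := by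
          convert Subgroup.closure_empty
          simp
        rw [h0, Subgroup.mem_bot] at hg
        exact hg
      rw [this] at hgxy
      simpa using hgxy
    simp only [List.length_nil, List.prod_nil, v_one]
    omega
  | succ n ih =>
    intro L s hlen hmem hne htrans
    rcases L with _ | ⟨τ, L'⟩
    · -- same as base case
      have hcard : s.card ≤ 1 := by
        apply Finset.card_le_one.2
        intro x hx y hy
        obtain ⟨g, hg, hgxy⟩ := htrans x hx y hy
        have : g = 1 := by
          have h0 : Subgroup.closure {h : Perm α | h ∈ ([] : List (Perm α))} = ⊥ := by
            convert Subgroup.closure_empty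
            simp
          rw [h0, Subgroup.mem_bot] at hg
          exact hg
        rw [this] at hgxy
        simpa using hgxy
      simp only [List.length_nil, List.prod_nil, v_one]
      omega
    obtain ⟨a, b, hab, hτ, has, hbs⟩ := hmem τ (List.mem_cons_self)
    set Gp := Subgroup.closure {h : Perm α | h ∈ L'} with hGp
    have hlen' : L'.length ≤ n := by simpa using hlen
    have hmem' : ∀ g ∈ L', ∃ a b : α, a ≠ b ∧ g = swap a b ∧ a ∈ s ∧ b ∈ s :=
      fun g hg => hmem g (List.mem_cons_of_mem _ hg)
    have hprodL : (τ :: L').prod = swap a b * L'.prod := by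
      rw [List.prod_cons, hτ]
    by_cases hcase : ∃ g ∈ Gp, g a = b
    · -- same orbit: transitivity descends to L'
      have hstep : ∀ g ∈ Subgroup.closure {h : Perm α | h ∈ (τ :: L')}, ∀ x : α,
          ∃ k ∈ Gp, k x = g x := by
        intro g hg
        induction hg using Subgroup.closure_induction with
        | mem g hgS =>
          intro x
          rcases List.mem_cons.1 hgS with h | h
          · subst h
            rw [hτ]
            by_cases hxa : x = a
            · subst hxa
              obtain ⟨k, hk, hke⟩ := hcase
              exact ⟨k, hk, by rw [hke, Equiv.swap_apply_left]⟩
            · by_cases hxb : x = b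
              · subst hxb
                obtain ⟨k, hk, hke⟩ := hcase
                refine ⟨k⁻¹, inv_mem hk, ?_⟩
                rw [Equiv.swap_apply_right, ← hke]
                simp
              · exact ⟨1, one_mem _, by
                  rw [Equiv.swap_apply_of_ne_of_ne hxa hxb]; rfl⟩
          · exact ⟨g, Subgroup.subset_closure h, rfl⟩
        | one => intro x; exact ⟨1, one_mem _, rfl⟩
        | mul g k hgc hkc ihg ihk =>
          intro x
          obtain ⟨k2, hk2, e2⟩ := ihk x
          obtain ⟨k1, hk1, e1⟩ := ihg (k x)
          refine ⟨k1 * k2, mul_mem hk1 hk2, ?_⟩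
          have : (k1 * k2) x = k1 (k2 x) := rfl
          rw [this, e2, e1]
          rfl
        | inv g hgc ihg =>
          intro x
          obtain ⟨k1, hk1, e1⟩ := ihg (g⁻¹ x)
          refine ⟨k1⁻¹, inv_mem hk1, ?_⟩
          have : g (g⁻¹ x) = x := by simp
          rw [this] at e1
          have := congrArg (k1⁻¹ : Perm α) e1
          simpa using this.symm
      have htrans' : ∀ x ∈ s, ∀ y ∈ s, ∃ g ∈ Gp, g x = y := by
        intro x hx y hy
        obtain ⟨g, hg, hgxy⟩ := htrans x hx y hy
        obtain ⟨k, hk, hke⟩ := hstep g hg x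
        exact ⟨k, hk, by rw [hke, hgxy]⟩
      have IH := ih L' s hlen' hmem' hne htrans'
      have hd := v_le_swap_mul (g := L'.prod) hab
      rw [hprodL]
      simp only [List.length_cons]
      omega
    · -- different orbits: split
      set A : α → Prop := fun x => ∃ g ∈ Gp, g a = x with hA
      set B : α → Prop := fun x => ∃ g ∈ Gp, g b = x with hB
      have hAa : A a := ⟨1, one_mem _, rfl⟩
      have hBb : B b := ⟨1, one_mem _, rfl⟩
      have hnotAB : ∀ x, A x → B x → False := by
        rintro x ⟨g, hg, hge⟩ ⟨k, hk, hke⟩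
        refine hcase ⟨k⁻¹ * g, mul_mem (inv_mem hk) hg, ?_⟩
        have : (k⁻¹ * g) a = k⁻¹ (g a) := rfl
        rw [this, hge, ← hke]
        simp
      have hAcomp : ∀ x, A x → ∀ g ∈ Gp, A (g x) := by
        rintro x ⟨k, hk, hke⟩ g hg
        exact ⟨g * k, mul_mem hg hk, by
          have : (g * k) a = g (k a) := rfl
          rw [this, hke]⟩
      have hBcomp : ∀ x, B x → ∀ g ∈ Gp, B (g x) := by
        rintro x ⟨k, hk, hke⟩ g hg
        exact ⟨g * k, mul_mem hg hk, by
          have : (g * k) b = g (k b) := rfl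
          rw [this, hke]⟩
      have hswap_s : ∀ g ∈ {h : Perm α | h ∈ (τ :: L')}, ∀ x ∈ s, g x ∈ s := by
        intro g hg x hx
        obtain ⟨c, d, hcd, rfl, hcs, hds⟩ := hmem g hg
        by_cases hxc : x = c
        · subst hxc; rw [Equiv.swap_apply_left]; exact hds
        · by_cases hxd : x = d
          · subst hxd; rw [Equiv.swap_apply_right]; exact hcs
          · rw [Equiv.swap_apply_of_ne_of_ne hxc hxd]; exact hx
      have hpresGp : ∀ g ∈ Gp, ∀ x ∈ s, g x ∈ s :=
        closure_preserves _ s (fun g hg => hswap_s g (List.mem_cons_of_mem _ hg))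
      have hP : ∀ g ∈ Subgroup.closure {h : Perm α | h ∈ (τ :: L')}, ∀ x : α,
          (A x → A (g x) ∨ B (g x)) ∧ (B x → A (g x) ∨ B (g x)) ∧
          (¬ A x → ¬ B x → ¬ A (g x) ∧ ¬ B (g x)) := by
        intro g hg
        induction hg using Subgroup.closure_induction with
        | mem g hgS =>
          rcases List.mem_cons.1 hgS with h | h
          · subst h
            rw [hτ]
            intro x
            refine ⟨?_, ?_, ?_⟩
            · intro hAx
              by_cases hxa : x = a
              · subst hxa; rw [Equiv.swap_apply_left]; right; exact hBb
              · by_cases hxb : x = b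
                · exact (hnotAB x hAx (by rw [hxb]; exact hBb)).elim
                · rw [Equiv.swap_apply_of_ne_of_ne hxa hxb]; left; exact hAx
            · intro hBx
              by_cases hxb : x = b
              · subst hxb; rw [Equiv.swap_apply_right]; left; exact hAa
              · by_cases hxa : x = a
                · exact (hnotAB x (by rw [hxa]; exact hAa) hBx).elim
                · rw [Equiv.swap_apply_of_ne_of_ne hxa hxb]; right; exact hBx
            · intro hnA hnB
              have hxa : x ≠ a := fun h => by subst h; exact hnA hAa
              have hxb : x ≠ b := fun h => by subst h; exact hnB hBb
              rw [Equiv.swap_apply_of_ne_of_ne hxa hxb]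
              exact ⟨hnA, hnB⟩
          · have hgGp : g ∈ Gp := Subgroup.subset_closure h
            intro x
            refine ⟨fun hAx => Or.inl (hAcomp x hAx g hgGp),
              fun hBx => Or.inr (hBcomp x hBx g hgGp), ?_⟩
            intro hnA hnB
            constructor
            · intro hAgx
              apply hnA
              have := hAcomp (g x) hAgx g⁻¹ (inv_mem hgGp)
              simpa using this
            · intro hBgx
              apply hnB
              have := hBcomp (g x) hBgx g⁻¹ (inv_mem hgGp)
              simpa using this
        | one =>
          intro x
          refine ⟨fun h => Or.inl (by simpa using h), fun h => Or.inr (by simpa using h), ?_⟩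
          intro hnA hnB
          constructor
          · intro h; exact hnA (by simpa using h)
          · intro h; exact hnB (by simpa using h)
        | mul g k hgc hkc ihg ihk =>
          intro x
          have hgk : (g * k) x = g (k x) := rfl
          refine ⟨?_, ?_, ?_⟩
          · intro hAx
            rcases (ihk x).1 hAx with h | h
            · rcases (ihg (k x)).1 h with h' | h'
              · left; rw [hgk]; exact h'
              · right; rw [hgk]; exact h'
            · rcases (ihg (k x)).2.1 h with h' | h'
              · left; rw [hgk]; exact h'
              · right; rw [hgk]; exact h'
          · intro hBx
            rcases (ihk x).2.1 hBx with h | h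
            · rcases (ihg (k x)).1 h with h' | h'
              · left; rw [hgk]; exact h'
              · right; rw [hgk]; exact h'
            · rcases (ihg (k x)).2.1 h with h' | h'
              · left; rw [hgk]; exact h'
              · right; rw [hgk]; exact h'
          · intro hnA hnB
            have hk3 := (ihk x).2.2 hnA hnB
            have hg3 := (ihg (k x)).2.2 hk3.1 hk3.2
            rw [hgk]
            exact hg3
        | inv g hgc ihg =>
          intro x
          have hginv : g (g⁻¹ x) = x := by simp
          refine ⟨?_, ?_, ?_⟩
          · intro hAx
            by_contra hcon
            push_neg at hcon
            have h3 := (ihg (g⁻¹ x)).2.2 hcon.1 hcon.2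
            rw [hginv] at h3
            exact h3.1 hAx
          · intro hBx
            by_contra hcon
            push_neg at hcon
            have h3 := (ihg (g⁻¹ x)).2.2 hcon.1 hcon.2
            rw [hginv] at h3
            exact h3.2 hBx
          · intro hnA hnB
            constructor
            · intro hAy
              rcases (ihg (g⁻¹ x)).1 hAy with h | h <;> rw [hginv] at h
              exacts [hnA h, hnB h]
            · intro hBy
              rcases (ihg (g⁻¹ x)).2.1 hBy with h | h <;> rw [hginv] at h
              exacts [hnA h, hnB h]
      have hcover : ∀ x ∈ s, A x ∨ B x := by
        intro x hx
        obtain ⟨g, hg, hge⟩ := htrans a has x hx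
        have := (hP g hg a).1 hAa
        rw [hge] at this
        exact this
      set sa := s.filter A with hsa
      set sb := s.filter B with hsb
      have hunion : s = sa ∪ sb := by
        ext x
        simp only [hsa, hsb, Finset.mem_union, Finset.mem_filter]
        constructor
        · intro hx
          rcases hcover x hx with h | h
          exacts [Or.inl ⟨hx, h⟩, Or.inr ⟨hx, h⟩]
        · rintro (⟨h, _⟩ | ⟨h, _⟩) <;> exact h
      have hdisjab : _root_.Disjoint sa sb := by
        rw [Finset.disjoint_left]
        intro x hx1 hx2
        exact hnotAB x (Finset.mem_filter.1 hx1).2 (Finset.mem_filter.1 hx2).2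
      have hclass : ∀ g ∈ L', g.support ⊆ sa ∨ g.support ⊆ sb := by
        intro g hg
        obtain ⟨c, d, hcd, rfl, hcs, hds⟩ := hmem' g hg
        have hsupp : (swap c d).support = {c, d} := Equiv.Perm.support_swap hcd
        have hRcd : ∃ k ∈ Gp, k c = d :=
          ⟨swap c d, Subgroup.subset_closure hg, Equiv.swap_apply_left c d⟩
        obtain ⟨k2, hk2, hke2⟩ := hRcd
        rcases hcover c hcs with h | h
        · left
          rw [hsupp]
          intro x hx
          simp only [Finset.mem_insert, Finset.mem_singleton] at hx
          rcases hx with rfl | rfl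
          · exact Finset.mem_filter.2 ⟨hcs, h⟩
          · refine Finset.mem_filter.2 ⟨hds, ?_⟩
            obtain ⟨k, hk, hke⟩ := h
            exact ⟨k2 * k, mul_mem hk2 hk, by
              have : (k2 * k) a = k2 (k a) := rfl
              rw [this, hke, hke2]⟩
        · right
          rw [hsupp]
          intro x hx
          simp only [Finset.mem_insert, Finset.mem_singleton] at hx
          rcases hx with rfl | rfl
          · exact Finset.mem_filter.2 ⟨hcs, h⟩
          · refine Finset.mem_filter.2 ⟨hds, ?_⟩
            obtain ⟨k, hk, hke⟩ := h
            exact ⟨k2 * k, mul_mem hk2 hk, by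
              have : (k2 * k) b = k2 (k b) := rfl
              rw [this, hke, hke2]⟩
      set La := L'.filter (fun g => g.support ⊆ sa) with hLa
      set Lb := L'.filter (fun g => ¬ (g.support ⊆ sa)) with hLb
      have hLaMem : ∀ g ∈ La, g ∈ L' ∧ g.support ⊆ sa := by
        intro g hg
        rw [hLa, List.mem_filter] at hg
        exact ⟨hg.1, by simpa using hg.2⟩
      have hLbMem : ∀ g ∈ Lb, g ∈ L' ∧ g.support ⊆ sb := by
        intro g hg
        rw [hLb, List.mem_filter] at hg
        have hns : ¬ (g.support ⊆ sa) := by simpa using hg.2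
        rcases hclass g hg.1 with h | h
        · exact absurd h hns
        · exact ⟨hg.1, h⟩
      have hnotinA : ∀ g ∈ L', g ∉ La → g.support ⊆ sb := by
        intro g hg hgn
        have hns : ¬ (g.support ⊆ sa) := by
          intro hc
          exact hgn (by rw [hLa, List.mem_filter]; exact ⟨hg, by simpa using hc⟩)
        rcases hclass g hg with h | h
        · exact absurd h hns
        · exact h
      have hnotinB : ∀ g ∈ L', g ∉ Lb → g.support ⊆ sa := by
        intro g hg hgn
        by_contra hns
        exact hgn (by rw [hLb, List.mem_filter]; exact ⟨hg, by simpa using hns⟩)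
      have hlensplit : La.length + Lb.length = L'.length := by
        rw [hLa, hLb]
        have h := List.length_eq_length_filter_add (l := L') (fun g => decide (g.support ⊆ sa))
        simp only [← decide_not] at h
        omega
      have hprodsplit : L'.prod = La.prod * Lb.prod := by
        rw [hLa, hLb]
        apply prod_filter_commute
        intro x hx y hy hpx hpy
        have hysb : y.support ⊆ sb := by
          rcases hclass y hy with h | h
          · exact absurd h hpy
          · exact h
        have hd : x.Disjoint y := by
          rw [disjoint_iff_disjoint_support]
          exact Finset.disjoint_of_subset_left hpx (Finset.disjoint_of_subset_right hysb hdisjab)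
        exact hd.commute
      have hmemA : ∀ g ∈ La, ∃ c d : α, c ≠ d ∧ g = swap c d ∧ c ∈ sa ∧ d ∈ sa := by
        intro g hg
        obtain ⟨hgL, hsub⟩ := hLaMem g hg
        obtain ⟨c, d, hcd, rfl, _, _⟩ := hmem' _ hgL
        refine ⟨c, d, hcd, rfl, ?_, ?_⟩
        · apply hsub; rw [Equiv.Perm.support_swap hcd]; simp
        · apply hsub; rw [Equiv.Perm.support_swap hcd]; simp
      have hmemB : ∀ g ∈ Lb, ∃ c d : α, c ≠ d ∧ g = swap c d ∧ c ∈ sb ∧ d ∈ sb := by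
        intro g hg
        obtain ⟨hgL, hsub⟩ := hLbMem g hg
        obtain ⟨c, d, hcd, rfl, _, _⟩ := hmem' _ hgL
        refine ⟨c, d, hcd, rfl, ?_, ?_⟩
        · apply hsub; rw [Equiv.Perm.support_swap hcd]; simp
        · apply hsub; rw [Equiv.Perm.support_swap hcd]; simp
      have hane : sa.Nonempty := ⟨a, Finset.mem_filter.2 ⟨has, hAa⟩⟩
      have hbne : sb.Nonempty := ⟨b, Finset.mem_filter.2 ⟨hbs, hBb⟩⟩
      have hpres_sa : ∀ g ∈ Gp, ∀ x ∈ sa, g x ∈ sa := by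
        intro g hg x hx
        obtain ⟨hxs, hxA⟩ := Finset.mem_filter.1 hx
        exact Finset.mem_filter.2 ⟨hpresGp g hg x hxs, hAcomp x hxA g hg⟩
      have hpres_sb : ∀ g ∈ Gp, ∀ x ∈ sb, g x ∈ sb := by
        intro g hg x hx
        obtain ⟨hxs, hxB⟩ := Finset.mem_filter.1 hx
        exact Finset.mem_filter.2 ⟨hpresGp g hg x hxs, hBcomp x hxB g hg⟩
      have horbit : ∀ p : α, ∀ x, (∃ k ∈ Gp, k p = x) → ∀ y, (∃ k ∈ Gp, k p = y) →
          ∃ g ∈ Gp, g x = y := by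
        rintro p x ⟨k1, hk1, e1⟩ y ⟨k2, hk2, e2⟩
        refine ⟨k2 * k1⁻¹, mul_mem hk2 (inv_mem hk1), ?_⟩
        have h1 : (k2 * k1⁻¹) x = k2 (k1⁻¹ x) := rfl
        rw [h1, ← e1]
        simp [e2]
      have htransa : ∀ x ∈ sa, ∀ y ∈ sa, ∃ g ∈ Subgroup.closure {h : Perm α | h ∈ La}, g x = y := by
        intro x hx y hy
        obtain ⟨hxs, hxA⟩ := Finset.mem_filter.1 hx
        obtain ⟨hys, hyA⟩ := Finset.mem_filter.1 hy
        obtain ⟨g, hg, hge⟩ := horbit a x hxA y hyA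
        have hfix : ∀ g ∈ L', g ∉ La → ∀ z ∈ sa, g z = z := by
          intro g hgL hgn z hz
          have hsb' := hnotinA g hgL hgn
          by_contra hne'
          have hzsupp : z ∈ g.support := mem_support.2 hne'
          exact (Finset.disjoint_left.1 hdisjab) hz (hsb' hzsupp)
        obtain ⟨k, hk, hke⟩ := transfer_trans L' La sa (fun g hg => (hLaMem g hg).1)
          hfix hpres_sa g hg x hx
        exact ⟨k, hk, by rw [hke, hge]⟩
      have htransb : ∀ x ∈ sb, ∀ y ∈ sb, ∃ g ∈ Subgroup.closure {h : Perm α | h ∈ Lb}, g x = y := by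
        intro x hx y hy
        obtain ⟨hxs, hxB⟩ := Finset.mem_filter.1 hx
        obtain ⟨hys, hyB⟩ := Finset.mem_filter.1 hy
        obtain ⟨g, hg, hge⟩ := horbit b x hxB y hyB
        have hfix : ∀ g ∈ L', g ∉ Lb → ∀ z ∈ sb, g z = z := by
          intro g hgL hgn z hz
          have hsa' := hnotinB g hgL hgn
          by_contra hne'
          have hzsupp : z ∈ g.support := mem_support.2 hne'
          exact (Finset.disjoint_left.1 hdisjab) (hsa' hzsupp) hz
        obtain ⟨k, hk, hke⟩ := transfer_trans L' Lb sb (fun g hg => (hLbMem g hg).1)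
          hfix hpres_sb g hg x hx
        exact ⟨k, hk, by rw [hke, hge]⟩
      have hlenA : La.length ≤ n := le_trans (by rw [hLa]; exact List.length_filter_le _ _) hlen'
      have hlenB : Lb.length ≤ n := le_trans (by rw [hLb]; exact List.length_filter_le _ _) hlen'
      have IHa := ih La sa hlenA hmemA hane htransa
      have IHb := ih Lb sb hlenB hmemB hbne htransb
      have hPaPb : (La.prod).Disjoint (Lb.prod) := by
        rw [disjoint_iff_disjoint_support]
        have h1 := support_prod_sub La sa (fun g hg => (hLaMem g hg).2)
        have h2 := support_prod_sub Lb sb (fun g hg => (hLbMem g hg).2)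
        exact Finset.disjoint_of_subset_left h1 (Finset.disjoint_of_subset_right h2 hdisjab)
      have hvsplit : v L'.prod = v La.prod + v Lb.prod := by
        rw [hprodsplit, v_mul_disjoint hPaPb]
      have hnsc : ¬ (L'.prod).SameCycle a b := by
        rintro ⟨m, hm⟩
        exact hcase ⟨L'.prod ^ m,
          Subgroup.zpow_mem _ (Subgroup.list_prod_mem _ (fun x hx => Subgroup.subset_closure hx)) m, hm⟩
      have hmerge := merge_lemma hab hnsc
      have hcards : s.card = sa.card + sb.card := by
        rw [hunion]
        exact Finset.card_union_of_disjoint hdisjab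
      rw [hprodL]
      simp only [List.length_cons]
      omega





/-- Ree's bound: a transitive product-one factorization has total `v` at least `2(n-1)`. -/
theorem ree [Nonempty α] (l : List (Perm α)) (hprod : l.prod = 1)
    (htrans : ∀ x y : α, ∃ g ∈ Subgroup.closure {h : Perm α | h ∈ l}, g x = y) :
    2 * Fintype.card α ≤ (l.map v).sum + 2 := by
  classical
  have hfact := fun g : Perm α => exists_swap_factorization g
  choose F hF1 hF2 hF3 using hfact
  set W : List (Perm α) := (l.map F).flatten with hW
  have hWmem : ∀ τ ∈ W, ∃ a b : α, a ≠ b ∧ τ = swap a b ∧ a ∈ Finset.univ ∧ b ∈ Finset.univ := by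
    intro τ hτ
    rw [hW, List.mem_flatten] at hτ
    obtain ⟨Li, hLi, hτLi⟩ := hτ
    obtain ⟨g, hgl, rfl⟩ := List.mem_map.1 hLi
    obtain ⟨a, b, hab, he⟩ := hF1 g τ hτLi
    exact ⟨a, b, hab, he, Finset.mem_univ _, Finset.mem_univ _⟩
  have hWprod : W.prod = 1 := by
    rw [hW, List.prod_flatten, List.map_map]
    have h1 : ∀ g ∈ l, (List.prod ∘ F) g = id g := fun g _ => hF2 g
    rw [List.map_congr_left h1, List.map_id, hprod]
  have hle : Subgroup.closure {h : Perm α | h ∈ l} ≤ Subgroup.closure {h : Perm α | h ∈ W} := by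
    rw [Subgroup.closure_le]
    intro g hgl
    rw [← hF2 g]
    apply Subgroup.list_prod_mem
    intro x hx
    apply Subgroup.subset_closure
    rw [hW]
    exact List.mem_flatten.2 ⟨F g, List.mem_map_of_mem hgl, hx⟩
  have hWtrans : ∀ x ∈ (Finset.univ : Finset α), ∀ y ∈ Finset.univ,
      ∃ g ∈ Subgroup.closure {h : Perm α | h ∈ W}, g x = y := by
    intro x _ y _
    obtain ⟨g, hg, he⟩ := htrans x y
    exact ⟨g, hle hg, he⟩
  have hA := partA W.length W Finset.univ le_rfl hWmem Finset.univ_nonempty hWtrans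
  rw [hWprod, v_one] at hA
  have hlen : W.length ≤ (l.map v).sum := by
    rw [hW, List.length_flatten, List.map_map]
    have h1 : ∀ g ∈ l, (List.length ∘ F) g ≤ v g := fun g _ => hF3 g
    calc (l.map (List.length ∘ F)).sum ≤ (l.map v).sum := by
          apply List.sum_le_sum
          intro g hg
          exact hF3 g
      _ = (l.map v).sum := rfl
  rw [Finset.card_univ] at hA
  omega

/-- product of `List.ofFn` when all but one entry is `1`. -/
lemma prod_ofFn_single {M : Type*} [Monoid M] : ∀ {r : ℕ} (f : Fin r → M) (j : Fin r),
    (∀ i, i ≠ j → f i = 1) → (List.ofFn f).prod = f j := by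
  intro r
  induction r with
  | zero => exact fun f j => j.elim0
  | succ r ih =>
    intro f j hj
    rw [List.ofFn_succ, List.prod_cons]
    induction j using Fin.cases with
    | zero =>
      have htail : (List.ofFn (fun i : Fin r => f i.succ)).prod = 1 := by
        apply List.prod_eq_one
        intro x hx
        obtain ⟨i, rfl⟩ := List.mem_ofFn.1 hx
        exact hj i.succ (Fin.succ_ne_zero i)
      rw [htail, mul_one]
    | succ j' =>
      have hzero : f 0 = 1 := hj 0 (Fin.succ_ne_zero j').symm
      rw [hzero, one_mul]
      exact ih (fun i => f i.succ) j' (fun i hi => hj i.succ (by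
        intro h
        exact hi (Fin.succ_injective _ h)))

/-- The induced homomorphism on the quotient by an invariant setoid. -/
def qmap {β : Type*} (s : Setoid β) (G : Subgroup (Perm β))
    (hinv : ∀ g ∈ G, ∀ x y, s.r x y → s.r (g x) (g y)) : G →* Perm (Quotient s) where
  toFun g :=
    { toFun := Quotient.map g.1 (fun x y h => hinv g.1 g.2 x y h)
      invFun := Quotient.map (⇑(g.1⁻¹)) (fun x y h => hinv _ (inv_mem g.2) x y h)
      left_inv := by
        rintro ⟨x⟩
        show Quotient.mk s (g.1⁻¹ (g.1 x)) = Quotient.mk s x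
        exact congrArg (Quotient.mk s) (by simp)
      right_inv := by
        rintro ⟨x⟩
        show Quotient.mk s (g.1 (g.1⁻¹ x)) = Quotient.mk s x
        exact congrArg (Quotient.mk s) (by simp) }
  map_one' := by
    ext q
    induction q using Quotient.ind with
    | _ x => rfl
  map_mul' g h := by
    ext q
    induction q using Quotient.ind with
    | _ x => rfl

lemma qmap_mk {β : Type*} (s : Setoid β) (G : Subgroup (Perm β))
    (hinv : ∀ g ∈ G, ∀ x y, s.r x y → s.r (g x) (g y)) (g : G) (x : β) :
    qmap s G hinv g (Quotient.mk s x) = Quotient.mk s (g.1 x) := rfl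


lemma v_lt_support {f : Perm α} (hf : f ≠ 1) : v f + 1 ≤ f.support.card := by
  have h1 := vchar f
  have h2 : 0 < f.cycleType.card := Equiv.Perm.card_cycleType_pos.2 hf
  omega

end HurwitzAux

open Equiv Equiv.Perm HurwitzAux in
set_option maxHeartbeats 1000000 in
/-- For `r ≥ 3`, the group generated by a genus-0 pure-cycle Hurwitz factorization
acts primitively on `{1, …, d}`: the action is transitive, and the only invariant
equivalence relations (block systems) are the trivial ones (`⊥` is the partition into
singletons, `⊤` the partition with a single block). -/
theorem hurwitz_monodromy_primitive
    (d r : ℕ) (hd : 1 ≤ d) (hr : 3 ≤ r) (e : Fin r → ℕ)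
    (he : ∀ i, 2 ≤ e i ∧ e i ≤ d)
    (hsum : 2 * d - 2 = ∑ i, (e i - 1))
    (σ : Fin r → Equiv.Perm (Fin d))
    (hσ : HurwitzFactorization d r e σ) :
    (∀ x y : Fin d, ∃ g ∈ Subgroup.closure (Set.range σ), g x = y) ∧
    ∀ s : Setoid (Fin d),
      (∀ g ∈ Subgroup.closure (Set.range σ), ∀ x y : Fin d, s.r x y → s.r (g x) (g y)) →
      s = ⊥ ∨ s = ⊤ := by
  classical
  obtain ⟨hcyc, hprod, htrans⟩ := hσ
  refine ⟨htrans, ?_⟩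
  intro s hinv
  by_contra hcon
  push_neg at hcon
  obtain ⟨hnbot, hntop⟩ := hcon
  have hex1 : ∃ x y : Fin d, s.r x y ∧ x ≠ y := by
    by_contra h
    push_neg at h
    apply hnbot
    apply Setoid.ext
    intro x y
    have hb : (⊥ : Setoid (Fin d)) x y ↔ x = y := by
      rw [Setoid.bot_def]
    rw [hb]
    constructor
    · exact h x y
    · rintro rfl; exact s.refl x
  have hex2 : ∃ x y : Fin d, ¬ s.r x y := by
    by_contra h
    push_neg at h
    apply hntop
    apply Setoid.ext
    intro x y
    have ht : (⊤ : Setoid (Fin d)) x y ↔ True := by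
      rw [Setoid.top_def]; rfl
    rw [ht]
    exact ⟨fun _ => trivial, fun _ => h x y⟩
  set G := Subgroup.closure (Set.range σ) with hG
  set φ := qmap s G hinv with hφ
  have hsub : ∀ i, σ i ∈ G := fun i => Subgroup.subset_closure (Set.mem_range_self i)
  set σb : Fin r → Perm (Quotient s) := fun i => φ ⟨σ i, hsub i⟩ with hσb
  haveI : DecidableEq (Quotient s) := Classical.decEq _
  haveI : Fintype (Quotient s) := Fintype.ofFinite _
  haveI hne' : Nonempty (Fin d) := ⟨⟨0, hd⟩⟩
  haveI : Nonempty (Quotient s) := Nonempty.map (Quotient.mk s) inferInstance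
  have hprodG : (List.ofFn (fun i => (⟨σ i, hsub i⟩ : G))).prod = 1 := by
    apply Subtype.ext
    have hcoe : ((List.ofFn (fun i => (⟨σ i, hsub i⟩ : G))).prod : Perm (Fin d))
        = ((List.ofFn (fun i => (⟨σ i, hsub i⟩ : G))).map (Subtype.val)).prod := by
      exact SubmonoidClass.coe_list_prod _
    rw [hcoe, List.map_ofFn]
    show (List.ofFn σ).prod = _
    rw [hprod]
    rfl
  have hprodQ : (List.ofFn σb).prod = 1 := by
    have h1 : List.ofFn σb = (List.ofFn (fun i => (⟨σ i, hsub i⟩ : G))).map φ := by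
      rw [List.map_ofFn]
      rfl
    rw [h1, ← map_list_prod φ, hprodG, map_one]
  have hlift : ∀ g (hg : g ∈ G), ∃ h ∈ Subgroup.closure {k : Perm (Quotient s) | k ∈ List.ofFn σb},
      ∀ x : Fin d, h (Quotient.mk s x) = Quotient.mk s (g x) := by
    intro g hg
    induction hg using Subgroup.closure_induction with
    | mem g hgS =>
      obtain ⟨i, rfl⟩ := hgS
      refine ⟨σb i, Subgroup.subset_closure ?_, fun x => rfl⟩
      show σb i ∈ List.ofFn σb
      rw [List.mem_ofFn]
      exact ⟨i, rfl⟩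
    | one => exact ⟨1, one_mem _, fun x => rfl⟩
    | mul g k hgc hkc ihg ihk =>
      obtain ⟨h1, hh1, e1⟩ := ihg
      obtain ⟨h2, hh2, e2⟩ := ihk
      refine ⟨h1 * h2, mul_mem hh1 hh2, fun x => ?_⟩
      have h3 : (h1 * h2) (Quotient.mk s x) = h1 (h2 (Quotient.mk s x)) := rfl
      rw [h3, e2, e1]
      rfl
    | inv g hgc ihg =>
      obtain ⟨h1, hh1, e1⟩ := ihg
      refine ⟨h1⁻¹, inv_mem hh1, fun x => ?_⟩
      have h2 := e1 (g⁻¹ x)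
      rw [show g (g⁻¹ x) = x by simp] at h2
      have h3 := congrArg (⇑h1⁻¹) h2
      simpa using h3.symm
  have htransQ : ∀ q q' : Quotient s,
      ∃ h ∈ Subgroup.closure {k : Perm (Quotient s) | k ∈ List.ofFn σb}, h q = q' := by
    intro q q'
    obtain ⟨x, rfl⟩ := Quotient.exists_rep q
    obtain ⟨y, rfl⟩ := Quotient.exists_rep q'
    obtain ⟨g, hg, he'⟩ := htrans x y
    obtain ⟨h, hh, e'⟩ := hlift g hg
    exact ⟨h, hh, by rw [e' x, he']⟩
  set cls : Fin d → Finset (Fin d) := fun x => Finset.univ.filter (fun y => s.r x y) with hcls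
  have hclscard : ∀ x y : Fin d, (cls x).card = (cls y).card := by
    intro x y
    obtain ⟨g, hg, he'⟩ := htrans x y
    have himg : (cls x).image g = cls y := by
      ext w
      simp only [Finset.mem_image, hcls, Finset.mem_filter, Finset.mem_univ, true_and]
      constructor
      · rintro ⟨z, hz, rfl⟩
        have h2 := hinv g hg x z hz
        rwa [he'] at h2
      · intro hw
        refine ⟨g⁻¹ w, ?_, by simp⟩
        have h2 := hinv g⁻¹ (inv_mem hg) y w hw
        rw [← he'] at h2
        have h3 : g⁻¹ (g x) = x := by simp
        rwa [h3] at h2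
    rw [← himg, Finset.card_image_of_injective _ g.injective]
  set x0 : Fin d := ⟨0, hd⟩ with hx0
  set m := (cls x0).card with hm
  set n := Fintype.card (Quotient s) with hn
  have hfibercard : ∀ q : Quotient s,
      (Finset.univ.filter (fun x : Fin d => Quotient.mk s x = q)).card = m := by
    intro q
    obtain ⟨y, rfl⟩ := Quotient.exists_rep q
    have h1 : Finset.univ.filter (fun x : Fin d => Quotient.mk s x = Quotient.mk s y) = cls y := by
      ext z
      simp only [Finset.mem_filter, Finset.mem_univ, true_and, hcls]
      constructor
      · intro h2
        exact s.symm (Quotient.exact h2)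
      · intro h2
        exact Quotient.sound (s.symm h2)
    rw [h1, hclscard y x0]
  have hdnm : d = n * m := by
    have h1 := Finset.card_eq_sum_card_fiberwise
      (f := fun x : Fin d => Quotient.mk s x) (s := Finset.univ) (t := Finset.univ)
      (fun x _ => Finset.mem_univ _)
    rw [Finset.card_univ, Fintype.card_fin] at h1
    rw [h1, Finset.sum_congr rfl (fun q _ => hfibercard q), Finset.sum_const, smul_eq_mul,
      Finset.card_univ, hn]
  have hm2 : 2 ≤ m := by
    obtain ⟨x, y, hrxy, hnexy⟩ := hex1
    have hsub2 : ({x, y} : Finset (Fin d)) ⊆ cls x := by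
      intro z hz
      simp only [Finset.mem_insert, Finset.mem_singleton] at hz
      simp only [hcls, Finset.mem_filter, Finset.mem_univ, true_and]
      rcases hz with rfl | rfl
      · exact s.refl z
      · exact hrxy
    calc 2 = ({x, y} : Finset (Fin d)).card := (Finset.card_pair hnexy).symm
      _ ≤ (cls x).card := Finset.card_le_card hsub2
      _ = m := hclscard x x0
  have hn2 : 2 ≤ n := by
    obtain ⟨x, y, hnr⟩ := hex2
    have hneq : Quotient.mk s x ≠ Quotient.mk s y := fun h => hnr (Quotient.exact h)
    haveI : Nontrivial (Quotient s) := ⟨_, _, hneq⟩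
    rw [hn]
    exact Fintype.one_lt_card_iff_nontrivial.2 this
  have hsupp : ∀ i, m * ((σb i).support.card) ≤ e i := by
    intro i
    rw [← (hcyc i).2]
    set T := Finset.univ.filter (fun x : Fin d => Quotient.mk s x ∈ (σb i).support) with hT
    have hTsub : T ⊆ (σ i).support := by
      intro x hx
      rw [hT, Finset.mem_filter] at hx
      rw [mem_support]
      intro hfix
      rw [mem_support] at hx
      apply hx.2
      show σb i (Quotient.mk s x) = Quotient.mk s x
      have h2 : σb i (Quotient.mk s x) = Quotient.mk s (σ i x) := rfl
      rw [h2, hfix]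
    have hTcard : T.card = (σb i).support.card * m := by
      have h1 := Finset.card_eq_sum_card_fiberwise
        (f := fun x : Fin d => Quotient.mk s x) (s := T) (t := (σb i).support)
        (fun x hx => (Finset.mem_filter.1 hx).2)
      rw [h1]
      have h2 : ∀ q ∈ (σb i).support,
          (T.filter (fun x => Quotient.mk s x = q)).card = m := by
        intro q hq
        rw [← hfibercard q]
        congr 1
        ext z
        simp only [hT, Finset.mem_filter, Finset.mem_univ, true_and]
        constructor
        · rintro ⟨_, h3⟩; exact h3
        · intro h3; exact ⟨by rw [h3]; exact hq, h3⟩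
      rw [Finset.sum_congr rfl h2, Finset.sum_const, smul_eq_mul]
    calc m * (σb i).support.card = T.card := by rw [hTcard]; ring
      _ ≤ (σ i).support.card := Finset.card_le_card hTsub
  have hree := ree (List.ofFn σb) hprodQ htransQ
  have hsum2 : ((List.ofFn σb).map v).sum = ∑ i, v (σb i) := by
    rw [List.map_ofFn, List.sum_ofFn]
    rfl
  set S := ∑ i, v (σb i) with hS
  set A := Finset.univ.filter (fun i => σb i ≠ 1) with hA
  set k := A.card with hk
  have hvi : ∀ i ∈ A, m * v (σb i) + m ≤ e i := by
    intro i hi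
    have hnei := (Finset.mem_filter.1 hi).2
    have h1 := v_lt_support hnei
    calc m * v (σb i) + m = m * (v (σb i) + 1) := by ring
      _ ≤ m * (σb i).support.card := Nat.mul_le_mul_left m h1
      _ ≤ e i := hsupp i
  have hSA : ∑ i ∈ A, v (σb i) = S := by
    rw [hS]
    have h0 : ∀ i ∈ Finset.univ \ A, v (σb i) = 0 := by
      intro i hi
      rw [Finset.mem_sdiff] at hi
      have : σb i = 1 := by
        by_contra h
        exact hi.2 (Finset.mem_filter.2 ⟨Finset.mem_univ _, h⟩)
      rw [this, v_one]
    rw [← Finset.sum_subset (Finset.subset_univ A)]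
    intro x _ hx
    exact h0 x (Finset.mem_sdiff.2 ⟨Finset.mem_univ _, hx⟩)
  have hsum3 : m * S + m * k + 2 * (r - k) ≤ ∑ i, e i := by
    have hsplit : ∑ i ∈ A, e i + ∑ i ∈ Aᶜ, e i = ∑ i, e i := Finset.sum_add_sum_compl A e
    have h1 : ∑ i ∈ A, (m * v (σb i) + m) ≤ ∑ i ∈ A, e i := Finset.sum_le_sum hvi
    have h3 : ∑ i ∈ A, (m * v (σb i) + m) = m * S + m * k := by
      rw [Finset.sum_add_distrib, Finset.sum_const, ← Finset.mul_sum, hSA, smul_eq_mul, hk]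
      ring
    have h2 : ∑ i ∈ Aᶜ, 2 ≤ ∑ i ∈ Aᶜ, e i := Finset.sum_le_sum (fun i _ => (he i).1)
    have h5 : ∑ _i ∈ Aᶜ, (2 : ℕ) = 2 * (r - k) := by
      rw [Finset.sum_const, smul_eq_mul, Finset.card_compl, Fintype.card_fin, hk]
      ring
    omega
  have hsum4 : ∑ i, (e i - 1) + r = ∑ i, e i := by
    have h1 : ∀ i ∈ (Finset.univ : Finset (Fin r)), (e i - 1) + 1 = e i := fun i _ => by
      have := (he i).1; omega
    calc ∑ i, (e i - 1) + r = ∑ i, ((e i - 1) + 1) := by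
          rw [Finset.sum_add_distrib, Finset.sum_const, smul_eq_mul, mul_one, Finset.card_univ,
            Fintype.card_fin]
      _ = ∑ i, e i := Finset.sum_congr rfl h1
  have hSb : 2 * n ≤ S + 2 := by
    rw [hsum2] at hree
    rw [hn]
    omega
  have hkr : k ≤ r := by
    rw [hk]
    calc A.card ≤ Finset.univ.card := Finset.card_le_card (Finset.subset_univ A)
      _ = r := by rw [Finset.card_univ, Fintype.card_fin]
  by_cases hk2 : 2 ≤ k
  · have hmk : 2 * m + 2 * (k - 2) ≤ m * k := by
      have h1 : m * k = m * 2 + m * (k - 2) := by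
        rw [← Nat.mul_add]
        congr 1
        omega
      have h2 : 2 * (k - 2) ≤ m * (k - 2) := Nat.mul_le_mul_right _ hm2
      omega
    have h6 : 2 * (n * m) ≤ m * S + 2 * m := by
      calc 2 * (n * m) = m * (2 * n) := by ring
        _ ≤ m * (S + 2) := Nat.mul_le_mul_left m hSb
        _ = m * S + 2 * m := by ring
    omega
  · push_neg at hk2
    by_cases hk0 : k = 0
    · have hAempty : A = ∅ := Finset.card_eq_zero.1 (by rw [← hk]; exact hk0)
      have hall : ∀ i, σb i = 1 := by
        intro i
        by_contra h
        have : i ∈ A := Finset.mem_filter.2 ⟨Finset.mem_univ _, h⟩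
        rw [hAempty] at this
        exact absurd this (Finset.notMem_empty i)
      obtain ⟨x, y, hnr⟩ := hex2
      obtain ⟨h, hh, he'⟩ := htransQ (Quotient.mk s x) (Quotient.mk s y)
      have hh1 : h = 1 := by
        have hle : Subgroup.closure {k : Perm (Quotient s) | k ∈ List.ofFn σb} ≤ ⊥ := by
          rw [Subgroup.closure_le]
          intro g hg
          obtain ⟨i, rfl⟩ := List.mem_ofFn.1 hg
          rw [SetLike.mem_coe, Subgroup.mem_bot]
          exact hall i
        exact Subgroup.mem_bot.1 (hle hh)
      rw [hh1] at he'
      exact hnr (Quotient.exact (by simpa using he'))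
    · have hk1 : k = 1 := by omega
      obtain ⟨j, hj⟩ := Finset.card_eq_one.1 (by rw [← hk]; exact hk1)
      have hone : ∀ i, i ≠ j → σb i = 1 := by
        intro i hij
        by_contra h
        have : i ∈ A := Finset.mem_filter.2 ⟨Finset.mem_univ _, h⟩
        rw [hj] at this
        exact hij (Finset.mem_singleton.1 this)
      have hjA : j ∈ A := by rw [hj]; exact Finset.mem_singleton_self j
      have hjne : σb j ≠ 1 := (Finset.mem_filter.1 hjA).2
      have hps := prod_ofFn_single σb j hone
      rw [hprodQ] at hps
      exact hjne hps.symm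


end HurwitzAuxSection
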